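/- Let f4 be the binary morphism with f4(0)=0, f4(1)=1000010011, and w4 = f4(t) where t is the Thue–Morse word. If p·y is a prefix of w4 and y = f4(s) for some factor s of t containing at least one 1, then p = f4(τ) for some prefix τ of t. -/

import Mathlib

def IsFactor {α : Type*} (u : List α) (w : ℕ → α) : Prop :=
  ∃ i, u = (List.range u.length).map fun j => w (i + j)

def tm : ℕ → Fin 2 := fun n => if (Nat.digits 2 n).sum % 2 = 0 then 0 else 1

def tmPrefix (n : ℕ) : List (Fin 2) := (List.range n).map tm

def f4 : Fin 2 → List (Fin 2) :=
  fun a => if a = 0 then [0] else [1, 0, 0, 0, 0, 1, 0, 0, 1, 1]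

def IsPrefT (u : List (Fin 2)) : Prop := u = tmPrefix u.length

def IsPrefW4 (p : List (Fin 2)) : Prop := ∃ n, p <+: (tmPrefix n).flatMap f4

/-! ### Auxiliary development -/

private lemma f4_zero : f4 0 = [0] := rfl

private lemma f4_one : f4 1 = [1, 0, 0, 0, 0, 1, 0, 0, 1, 1] := rfl

private lemma fin2_eq_one {a : Fin 2} (h : a ≠ 0) : a = 1 := by fin_cases a <;> simp_all

private lemma bind_cons (a : Fin 2) (l : List (Fin 2)) :
    (a :: l).flatMap f4 = f4 a ++ l.flatMap f4 := List.flatMap_cons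

private lemma bind_append (l₁ l₂ : List (Fin 2)) :
    (l₁ ++ l₂).flatMap f4 = l₁.flatMap f4 ++ l₂.flatMap f4 := List.flatMap_append

private lemma bind_singleton (a : Fin 2) : [a].flatMap f4 = f4 a := by
  rw [bind_cons]; exact List.append_nil _

private def W4 (n : ℕ) : List (Fin 2) := (tmPrefix n).flatMap f4

private lemma LLdef (n : ℕ) : (W4 n).length = (W4 n).length := rfl

private def LL (n : ℕ) : ℕ := (W4 n).length

private lemma LL_def (n : ℕ) : LL n = (W4 n).length := rfl

private def wpt (n : ℕ) : Fin 2 := (W4 (n + 1)).getD n 0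

private lemma tmPrefix_succ (k : ℕ) : tmPrefix (k + 1) = tmPrefix k ++ [tm k] := by
  simp [tmPrefix, List.range_succ]

private lemma W4_succ (k : ℕ) : W4 (k + 1) = W4 k ++ f4 (tm k) := by
  rw [W4, W4, tmPrefix_succ, bind_append, bind_singleton]

private lemma f4_ne_nil (a : Fin 2) : f4 a ≠ [] := by fin_cases a <;> simp [f4_zero, f4_one]

private lemma f4_len_pos (a : Fin 2) : 0 < (f4 a).length := by
  fin_cases a <;> simp [f4_zero, f4_one]

private lemma LL_succ (k : ℕ) : LL (k + 1) = LL k + (f4 (tm k)).length := by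
  simp [LL_def, W4_succ]

private lemma LL_zero : LL 0 = 0 := rfl

private lemma le_LL (n : ℕ) : n ≤ LL n := by
  induction n with
  | zero => simp [LL_zero]
  | succ k ih => have := f4_len_pos (tm k); rw [LL_succ]; omega

private lemma W4_prefix {m n : ℕ} (h : m ≤ n) : W4 m <+: W4 n := by
  induction n with
  | zero => simp_all
  | succ k ih =>
    rcases Nat.lt_or_ge m (k + 1) with h' | h'
    · exact (ih (by omega)).trans ⟨f4 (tm k), (W4_succ k).symm⟩
    · have : m = k + 1 := by omega
      subst this; exact List.prefix_refl _

private lemma getD_of_prefix {l₁ l₂ : List (Fin 2)} (h : l₁ <+: l₂) {i : ℕ}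
    (hi : i < l₁.length) : l₂.getD i 0 = l₁.getD i 0 := by
  obtain ⟨t, rfl⟩ := h
  exact List.getD_append _ _ _ _ hi

private lemma wpt_eq {n i : ℕ} (hi : i < LL n) : wpt i = (W4 n).getD i 0 := by
  rcases Nat.le_total (i + 1) n with h | h
  · refine (getD_of_prefix (W4_prefix h) ?_).symm
    have := le_LL (i + 1)
    rw [LL_def] at this
    omega
  · exact getD_of_prefix (W4_prefix h) (by rw [← LL_def]; exact hi)

private lemma wpt_block {k j : ℕ} (hj : j < (f4 (tm k)).length) :
    wpt (LL k + j) = (f4 (tm k)).getD j 0 := by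
  have h1 : LL k + j < LL (k + 1) := by rw [LL_succ]; omega
  rw [wpt_eq h1, W4_succ,
    List.getD_append_right _ _ _ _ (by rw [← LL_def]; omega : (W4 k).length ≤ LL k + j)]
  congr 1
  rw [← LL_def]
  omega

private lemma coverage (q : ℕ) : ∃ k j, q = LL k + j ∧ j < (f4 (tm k)).length := by
  induction q with
  | zero => exact ⟨0, 0, by simp [LL_zero], f4_len_pos _⟩
  | succ q ih =>
    obtain ⟨k, j, rfl, hj⟩ := ih
    rcases Nat.lt_or_ge (j + 1) (f4 (tm k)).length with h | h
    · exact ⟨k, j + 1, by omega, h⟩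
    · refine ⟨k + 1, 0, ?_, f4_len_pos _⟩
      rw [LL_succ]; omega

private lemma tm_even_ne (n : ℕ) : tm (2 * n) ≠ tm (2 * n + 1) := by
  have h1 : (Nat.digits 2 (2 * n + 1)).sum = 1 + (Nat.digits 2 n).sum := by
    rw [Nat.digits_def' (by norm_num : (1:ℕ) < 2) (by omega),
      show (2 * n + 1) % 2 = 1 by omega, show (2 * n + 1) / 2 = n by omega]
    simp
  have h0 : (Nat.digits 2 (2 * n)).sum = (Nat.digits 2 n).sum := by
    rcases Nat.eq_zero_or_pos n with rfl | hn
    · simp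
    · rw [show 2 * n = 2 * n by rfl, Nat.digits_def' (by norm_num : (1:ℕ) < 2) (by omega),
        show (2 * n) % 2 = 0 by omega, show (2 * n) / 2 = n by omega]
      simp
  simp only [tm, h0, h1]
  rcases Nat.mod_two_eq_zero_or_one (Nat.digits 2 n).sum with h | h <;>
    simp [Nat.add_mod, h]

private lemma no000 {k : ℕ} (h1 : tm k = 0) (h2 : tm (k + 1) = 0) : tm (k + 2) = 1 := by
  rcases Nat.even_or_odd k with ⟨m, hm⟩ | ⟨m, hm⟩
  · exfalso
    have h := tm_even_ne m
    rw [show 2 * m = k by omega] at h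
    rw [h1, h2] at h
    exact h rfl
  · have h := tm_even_ne (m + 1)
    rw [show 2 * (m + 1) = k + 1 by omega] at h
    rw [h2] at h
    exact fin2_eq_one (fun hc => h (by rw [hc]))

private lemma f4_getD_zero (a : Fin 2) : (f4 a).getD 0 0 = a := by
  fin_cases a <;> rfl

private lemma sync {q : ℕ} (h0 : wpt q = 1) (h1 : wpt (q + 1) = 0)
    (h2 : wpt (q + 2) = 0) (h3 : wpt (q + 3) = 0) : ∃ k, q = LL k := by
  obtain ⟨k, j, rfl, hj⟩ := coverage q
  have hb := wpt_block hj
  rw [h0] at hb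
  by_cases htk : tm k = 0
  · rw [htk] at hb hj
    rw [f4_zero] at hj
    have hj0 : j = 0 := Nat.lt_one_iff.mp hj
    subst hj0
    rw [f4_zero] at hb
    exact absurd hb (by decide)
  · have htk : tm k = 1 := fin2_eq_one htk
    rw [htk] at hb hj
    rw [f4_one] at hj
    have hj10 : j < 10 := hj
    rw [f4_one] at hb
    have hlen : (f4 (tm k)).length = 10 := by rw [htk, f4_one]; rfl
    interval_cases j
    · exact ⟨k, by omega⟩
    · exact absurd hb (by decide)
    · exact absurd hb (by decide)
    · exact absurd hb (by decide)
    · exact absurd hb (by decide)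
    · -- j = 5 : wpt (q+3) = block char at 8 = 1
      exfalso
      have h8 := wpt_block (k := k) (j := 8) (by omega)
      rw [show LL k + 5 + 3 = LL k + 8 by omega, h8, htk, f4_one] at h3
      exact absurd h3 (by decide)
    · exact absurd hb (by decide)
    · exact absurd hb (by decide)
    · -- j = 8 : wpt (q+1) = block char at 9 = 1
      exfalso
      have h9 := wpt_block (k := k) (j := 9) (by omega)
      rw [show LL k + 8 + 1 = LL k + 9 by omega, h9, htk, f4_one] at h1
      exact absurd h1 (by decide)
    · -- j = 9 : cross block analysis
      exfalso
      have e1 : LL k + 9 + 1 = LL (k + 1) := by rw [LL_succ, hlen]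
      have w1 : wpt (LL (k + 1) + 0) = tm (k + 1) := by
        rw [wpt_block (f4_len_pos _), f4_getD_zero]
      rw [e1, ← Nat.add_zero (LL (k+1)), w1] at h1
      have hl1 : (f4 (tm (k + 1))).length = 1 := by rw [h1, f4_zero]; rfl
      have e2 : LL k + 9 + 2 = LL (k + 2) := by rw [LL_succ, hl1, ← e1]
      have w2 : wpt (LL (k + 2) + 0) = tm (k + 2) := by
        rw [wpt_block (f4_len_pos _), f4_getD_zero]
      rw [e2, ← Nat.add_zero (LL (k+2)), w2] at h2
      have h3' : tm (k + 3) = 1 := no000 h1 h2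
      have hl2 : (f4 (tm (k + 2))).length = 1 := by rw [h2, f4_zero]; rfl
      have e3 : LL k + 9 + 3 = LL (k + 3) := by rw [LL_succ, hl2, ← e2]
      have w3 : wpt (LL (k + 3) + 0) = tm (k + 3) := by
        rw [wpt_block (f4_len_pos _), f4_getD_zero]
      rw [e3, ← Nat.add_zero (LL (k+3)), w3, h3'] at h3
      exact absurd h3 (by decide)

private lemma f4_getLast? (a : Fin 2) : (f4 a).getLast? = some a := by
  fin_cases a <;> rfl

private lemma back (u : List (Fin 2)) : ∀ k, (u.flatMap f4) <:+ W4 k →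
    ∃ m, W4 m ++ u.flatMap f4 = W4 k := by
  induction u using List.reverseRecOn with
  | nil => intro k _; exact ⟨k, by simp⟩
  | append_singleton u' a ih =>
    intro k hsuf
    rw [bind_append, bind_singleton] at hsuf
    obtain ⟨c, hc⟩ := hsuf
    match k with
    | 0 =>
      exfalso
      rw [show W4 0 = ([] : List (Fin 2)) from rfl] at hc
      rcases List.append_eq_nil_iff.mp hc with ⟨-, h2⟩
      rcases List.append_eq_nil_iff.mp h2 with ⟨-, h3⟩
      exact f4_ne_nil a h3
    | k' + 1 =>
      rw [W4_succ] at hc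
      have ha : a = tm k' := by
        have hl := congrArg List.getLast? hc
        rw [List.getLast?_append_of_ne_nil _ (f4_ne_nil (tm k')),
          List.getLast?_append_of_ne_nil _
            (fun hnil => f4_ne_nil a (List.append_eq_nil_iff.mp hnil).2),
          List.getLast?_append_of_ne_nil _ (f4_ne_nil a),
          f4_getLast?, f4_getLast?] at hl
        exact Option.some.inj hl
      subst ha
      rw [← List.append_assoc] at hc
      have hc' : c ++ u'.flatMap f4 = W4 k' := by
        refine (List.append_inj hc ?_).1
        have hlen := congrArg List.length hc
        simp only [List.length_append] at hlen ⊢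
        omega
      obtain ⟨m, hm⟩ := ih k' ⟨c, hc'⟩
      refine ⟨m, ?_⟩
      rw [bind_append, bind_singleton, W4_succ, ← hm]
      simp [List.append_assoc]

private lemma prefix_eq_of_length {l₁ l₂ l : List (Fin 2)} (h1 : l₁ <+: l) (h2 : l₂ <+: l)
    (hl : l₁.length = l₂.length) : l₁ = l₂ := by
  obtain ⟨t1, rfl⟩ := h1
  obtain ⟨t2, h⟩ := h2
  exact (List.append_inj h.symm hl).1

/-- If `p · y` is a prefix of `w4 = f4(t)` with `y = f4(s)` for a factor `s` of `t`
containing at least one `1`, then `p = f4(τ)` for some prefix `τ` of `t`. -/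
theorem stmt17 (p y s : List (Fin 2)) (hpy : IsPrefW4 (p ++ y))
    (hs : IsFactor s tm) (hy : y = s.flatMap f4) (h1 : 0 < s.count 1) :
    ∃ τ : List (Fin 2), IsPrefT τ ∧ p = τ.flatMap f4 := by
  have hmem : (1 : Fin 2) ∈ s := List.count_pos_iff.mp h1
  obtain ⟨u, v, rfl⟩ := List.append_of_mem hmem
  obtain ⟨N, hpre⟩ := hpy
  obtain ⟨r, hr⟩ := hpre
  have hy' : y = u.flatMap f4 ++ (f4 1 ++ v.flatMap f4) := by
    rw [hy, bind_append, bind_cons]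
  have hW : (p ++ u.flatMap f4) ++ (f4 1 ++ (v.flatMap f4 ++ r)) = W4 N := by
    simp only [W4]
    rw [← hr, hy']
    simp [List.append_assoc]
  set q := (p ++ u.flatMap f4).length with hq
  have hlenW : LL N = q + 10 + (v.flatMap f4 ++ r).length := by
    have hl := congrArg List.length hW
    rw [LL_def, hq]
    simp only [List.length_append, f4_one, List.length_cons, List.length_nil] at hl ⊢
    omega
  have hwpt : ∀ i, i < 10 → wpt (q + i) = (f4 1).getD i 0 := by
    intro i hi
    rw [wpt_eq (n := N) (by omega)]
    rw [← hW, List.getD_append_right _ _ _ _ (by omega : (p ++ u.flatMap f4).length ≤ q + i),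
      show q + i - (p ++ u.flatMap f4).length = i from by omega]
    exact List.getD_append _ _ _ _ (by rw [f4_one]; exact hi)
  obtain ⟨k, hk⟩ := sync
    (by have h := hwpt 0 (by omega); rw [h]; rfl)
    (by have h := hwpt 1 (by omega); rw [h]; rfl)
    (by have h := hwpt 2 (by omega); rw [h]; rfl)
    (by have h := hwpt 3 (by omega); rw [h]; rfl)
  have hkN : k ≤ N := by
    by_contra hcon
    have hNk : W4 (N + 1) <+: W4 k := W4_prefix (by omega)
    have hl1 : LL (N + 1) ≤ LL k := by rw [LL_def, LL_def]; exact hNk.length_le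
    have hNlt : LL N < LL (N + 1) := by
      rw [LL_succ]; have := f4_len_pos (tm N); omega
    omega
  have hAW : p ++ u.flatMap f4 = W4 k := by
    refine prefix_eq_of_length ⟨_, hW⟩ (W4_prefix hkN) ?_
    rw [← LL_def, ← hk]
    omega
  obtain ⟨m, hm⟩ := back u k ⟨p, hAW⟩
  rw [← hAW] at hm
  have hp : p = W4 m := by
    refine ((List.append_inj hm ?_).1).symm
    have hlm := congrArg List.length hm
    simp only [List.length_append] at hlm ⊢
    omega
  refine ⟨tmPrefix m, ?_, hp⟩
  simp [IsPrefT, tmPrefix]
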